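/- Suppose U(p) = A p + c is affine with A a diagonal linear map on ℝ², diag(ε_xx, ε_yy), with |ε_xx| < 1 and |ε_yy| < 1. Then for the scheme with zero corrective term, both components of the residual satisfy Δ_x^j = (-ε_xx)^{j-1} Δ_x^1 and Δ_y^j = (-ε_yy)^{j-1} Δ_y^1, and hence Δ^j → 0. -/

import Mathlib

open Filter Topology

/-- For an affine field with diagonal linear part diag(εxx, εyy), |εxx| < 1,
|εyy| < 1, the zero-corrective-term scheme satisfies
Δ_x^j = (-εxx)^(j-1) Δ_x^1, Δ_y^j = (-εyy)^(j-1) Δ_y^1, hence Δ^j → 0. -/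
theorem residual_diagonal_converges
    (εxx εyy : ℝ) (hx : |εxx| < 1) (hy : |εyy| < 1)
    (c : ℝ × ℝ) (U : ℝ × ℝ → ℝ × ℝ)
    (hU : ∀ p : ℝ × ℝ, U p = (εxx * p.1, εyy * p.2) + c)
    (Md : ℝ × ℝ) (M N Δ : ℕ → ℝ × ℝ)
    (hM1 : M 1 = Md)
    (hM : ∀ j, 2 ≤ j → M j = M (j - 1) + Δ (j - 1))
    (hN : ∀ j, 1 ≤ j → N j = M j + U (M j))
    (hΔ : ∀ j, 1 ≤ j → Δ j = Md - N j) :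
    (∀ j, 1 ≤ j → (Δ j).1 = (-εxx) ^ (j - 1) * (Δ 1).1 ∧
        (Δ j).2 = (-εyy) ^ (j - 1) * (Δ 1).2) ∧
      Tendsto Δ atTop (𝓝 0) := by
  -- one-step recurrence
  have key : ∀ j, 1 ≤ j → (Δ (j + 1)).1 = -εxx * (Δ j).1 ∧
      (Δ (j + 1)).2 = -εyy * (Δ j).2 := by
    intro j hj
    have hMj1 : M (j + 1) = M j + Δ j := by
      have := hM (j + 1) (by omega); simpa using this
    have h1 : Δ (j + 1) = Md - (M (j + 1) + U (M (j + 1))) := by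
      rw [hΔ (j + 1) (by omega), hN (j + 1) (by omega)]
    have h2 : Δ j = Md - (M j + U (M j)) := by
      rw [hΔ j hj, hN j hj]
    have e2x : (Δ j).1 = Md.1 - (M j).1 - εxx * (M j).1 - c.1 := by
      rw [h2, hU]; simp [Prod.fst]; ring
    have e2y : (Δ j).2 = Md.2 - (M j).2 - εyy * (M j).2 - c.2 := by
      rw [h2, hU]; simp [Prod.snd]; ring
    constructor
    · have : (Δ (j + 1)).1 =
          Md.1 - ((M j).1 + (Δ j).1) - εxx * ((M j).1 + (Δ j).1) - c.1 := by
        rw [h1, hU, hMj1]; simp [Prod.fst]; ring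
      rw [this]
      have := e2x
      nlinarith [this]
    · have : (Δ (j + 1)).2 =
          Md.2 - ((M j).2 + (Δ j).2) - εyy * ((M j).2 + (Δ j).2) - c.2 := by
        rw [h1, hU, hMj1]; simp [Prod.snd]; ring
      rw [this]
      nlinarith [e2y]
  have main : ∀ k : ℕ, (Δ (k + 1)).1 = (-εxx) ^ k * (Δ 1).1 ∧
      (Δ (k + 1)).2 = (-εyy) ^ k * (Δ 1).2 := by
    intro k
    induction k with
    | zero => simp
    | succ n ih =>
      obtain ⟨ih1, ih2⟩ := ih
      obtain ⟨k1, k2⟩ := key (n + 1) (by omega)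
      constructor
      · rw [k1, ih1]; ring
      · rw [k2, ih2]; ring
  have part1 : ∀ j, 1 ≤ j → (Δ j).1 = (-εxx) ^ (j - 1) * (Δ 1).1 ∧
      (Δ j).2 = (-εyy) ^ (j - 1) * (Δ 1).2 := by
    intro j hj
    obtain ⟨k, rfl⟩ : ∃ k, j = k + 1 := ⟨j - 1, by omega⟩
    simpa using main k
  refine ⟨part1, ?_⟩
  have hsub : Tendsto (fun j : ℕ => j - 1) atTop atTop := tendsto_sub_atTop_nat 1
  have tx : Tendsto (fun j : ℕ => (-εxx) ^ (j - 1) * (Δ 1).1) atTop (𝓝 0) := by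
    have := (tendsto_pow_atTop_nhds_zero_of_abs_lt_one
      (by rwa [abs_neg] : |(-εxx)| < 1)).comp hsub
    simpa using this.mul_const (Δ 1).1
  have ty : Tendsto (fun j : ℕ => (-εyy) ^ (j - 1) * (Δ 1).2) atTop (𝓝 0) := by
    have := (tendsto_pow_atTop_nhds_zero_of_abs_lt_one
      (by rwa [abs_neg] : |(-εyy)| < 1)).comp hsub
    simpa using this.mul_const (Δ 1).2
  have t1 : Tendsto (fun j => (Δ j).1) atTop (𝓝 0) := by
    refine tx.congr' ?_
    filter_upwards [eventually_ge_atTop 1] with j hj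
    exact ((part1 j hj).1).symm
  have t2 : Tendsto (fun j => (Δ j).2) atTop (𝓝 0) := by
    refine ty.congr' ?_
    filter_upwards [eventually_ge_atTop 1] with j hj
    exact ((part1 j hj).2).symm
  have : Tendsto (fun j => ((Δ j).1, (Δ j).2)) atTop (𝓝 ((0 : ℝ), (0 : ℝ))) :=
    t1.prodMk_nhds t2
  simpa [Prod.mk.eta, Prod.mk_zero_zero] using this
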